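/- For the k-variable NAE clause-gadget Hamiltonian (linked antiferromagnetic triangles), a ground state exists with the logical spins Z_{1,1}, Z_{1,2}, Z_{2,2}, ..., Z_{k-2,2}, Z_{k-2,3} taking any prescribed values v_1, ..., v_k ∈ {-1,+1} if and only if not all of v_1, ..., v_k are equal. -/

import Mathlib

/-- The `k`-variable NAE clause-gadget Hamiltonian: `k-2` antiferromagnetic
triangles (spins `Z i 0, Z i 1, Z i 2`) with the `k-3` linking terms
`Z_{i,3} Z_{i+1,1}`. -/
noncomputable def gadgetH (k : ℕ) (Z : Fin (k - 2) → Fin 3 → ℝ) : ℝ :=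
  (∑ i : Fin (k - 2), (Z i 0 * Z i 1 + Z i 1 * Z i 2 + Z i 0 * Z i 2)) +
  ∑ i : Fin (k - 3),
    Z ⟨i.1, by have := i.isLt; omega⟩ 2 * Z ⟨i.1 + 1, by have := i.isLt; omega⟩ 0

lemma tri_lb {a b c : ℝ} (ha : a = -1 ∨ a = 1) (hb : b = -1 ∨ b = 1)
    (hc : c = -1 ∨ c = 1) : -1 ≤ a * b + b * c + a * c := by
  rcases ha with rfl | rfl <;> rcases hb with rfl | rfl <;> rcases hc with rfl | rfl <;> norm_num

lemma link_lb {a b : ℝ} (ha : a = -1 ∨ a = 1) (hb : b = -1 ∨ b = 1) : -1 ≤ a * b := by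
  rcases ha with rfl | rfl <;> rcases hb with rfl | rfl <;> norm_num

lemma tri_forced {a b c : ℝ} (ha : a = -1 ∨ a = 1) (hb : b = -1 ∨ b = 1)
    (hc : c = -1 ∨ c = 1) (hab : a = b) (h : a * b + b * c + a * c = -1) : c = -a := by
  rcases ha with rfl | rfl <;> rcases hb with rfl | rfl <;> rcases hc with rfl | rfl <;>
    revert h hab <;> norm_num

lemma link_forced {a b : ℝ} (ha : a = -1 ∨ a = 1) (hb : b = -1 ∨ b = 1)
    (h : a * b = -1) : b = -a := by
  rcases ha with rfl | rfl <;> rcases hb with rfl | rfl <;> revert h <;> norm_num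

lemma spin_ne {a s : ℝ} (ha : a = -1 ∨ a = 1) (hs : s = -1 ∨ s = 1)
    (h : a ≠ s) : a = -s := by
  rcases ha with rfl | rfl <;> rcases hs with rfl | rfl <;> revert h <;> norm_num

lemma gadget_ground_iff (k : ℕ) (hk : 3 ≤ k) (Z : Fin (k - 2) → Fin 3 → ℝ)
    (hZ : ∀ i j, Z i j ∈ ({-1, 1} : Set ℝ)) :
    gadgetH k Z = -(2 * (k : ℝ) - 5) ↔
      ((∀ i : Fin (k - 2), Z i 0 * Z i 1 + Z i 1 * Z i 2 + Z i 0 * Z i 2 = -1) ∧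
       (∀ i : Fin (k - 3), Z ⟨i.1, by have := i.isLt; omega⟩ 2 *
          Z ⟨i.1 + 1, by have := i.isLt; omega⟩ 0 = -1)) := by
  have hs : ∀ i j, Z i j = -1 ∨ Z i j = 1 := fun i j => hZ i j
  have e1 : ((k - 2 : ℕ) : ℝ) = (k : ℝ) - 2 := by
    rw [Nat.cast_sub (by omega)]; norm_num
  have e2 : ((k - 3 : ℕ) : ℝ) = (k : ℝ) - 3 := by
    rw [Nat.cast_sub (by omega)]; norm_num
  have hconst1 : ∑ _i : Fin (k - 2), (-1 : ℝ) = -((k : ℝ) - 2) := by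
    rw [Finset.sum_const, Finset.card_univ, Fintype.card_fin, nsmul_eq_mul, e1]; ring
  have hconst2 : ∑ _i : Fin (k - 3), (-1 : ℝ) = -((k : ℝ) - 3) := by
    rw [Finset.sum_const, Finset.card_univ, Fintype.card_fin, nsmul_eq_mul, e2]; ring
  have hb1 : ∀ i ∈ Finset.univ, (-1 : ℝ) ≤ Z i 0 * Z i 1 + Z i 1 * Z i 2 + Z i 0 * Z i 2 :=
    fun i _ => tri_lb (hs i 0) (hs i 1) (hs i 2)
  have hb2 : ∀ i : Fin (k - 3), i ∈ Finset.univ → (-1 : ℝ) ≤ Z ⟨i.1, by have := i.isLt; omega⟩ 2 *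
      Z ⟨i.1 + 1, by have := i.isLt; omega⟩ 0 := fun i _ => link_lb (hs _ _) (hs _ _)
  constructor
  · intro h
    have hle1 := Finset.sum_le_sum hb1
    have hle2 := Finset.sum_le_sum hb2
    rw [hconst1] at hle1
    rw [hconst2] at hle2
    unfold gadgetH at h
    have hS1 : (∑ i : Fin (k - 2), (Z i 0 * Z i 1 + Z i 1 * Z i 2 + Z i 0 * Z i 2)) =
        -((k : ℝ) - 2) := by linarith
    have hS2 : (∑ i : Fin (k - 3),
        Z ⟨i.1, by have := i.isLt; omega⟩ 2 * Z ⟨i.1 + 1, by have := i.isLt; omega⟩ 0) =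
        -((k : ℝ) - 3) := by linarith
    constructor
    · intro i
      have := (Finset.sum_eq_sum_iff_of_le hb1).1 (by rw [hconst1, hS1]) i (Finset.mem_univ i)
      linarith [this]
    · intro i
      have := (Finset.sum_eq_sum_iff_of_le hb2).1 (by rw [hconst2, hS2]) i (Finset.mem_univ i)
      linarith [this]
  · rintro ⟨h1, h2⟩
    unfold gadgetH
    rw [Finset.sum_congr rfl (fun i _ => h1 i), Finset.sum_congr rfl (fun i _ => h2 i),
      hconst1, hconst2]
    ring

lemma gadget_constr (k : ℕ) (hk : 2 < k) (v : Fin k → ℝ)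
    (hv : ∀ i, v i ∈ ({-1, 1} : Set ℝ)) (s : ℝ) (hs : s = -1 ∨ s = 1)
    (hs0 : v ⟨0, by omega⟩ = s) (m : ℕ) (hm : m ≤ k - 2)
    (hP1 : m < k - 2 → v ⟨m + 1, by omega⟩ = -s)
    (hP2 : v ⟨k - 1, by omega⟩ = if k - 3 < m then -s else s) :
    (∃ Z : Fin (k - 2) → Fin 3 → ℝ,
      (∀ i j, Z i j ∈ ({-1, 1} : Set ℝ)) ∧
      gadgetH k Z = -(2 * (k : ℝ) - 5) ∧
      Z ⟨0, by omega⟩ 0 = v ⟨0, by omega⟩ ∧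
      (∀ i : Fin (k - 2), Z i 1 = v ⟨i.1 + 1, by have := i.isLt; omega⟩) ∧
      Z ⟨k - 3, by omega⟩ 2 = v ⟨k - 1, by omega⟩) := by
  have hvc : ∀ i, v i = -1 ∨ v i = 1 := fun i => hv i
  obtain ⟨Z, hZ0, hZ1, hZ2⟩ : ∃ Z : Fin (k - 2) → Fin 3 → ℝ,
      (∀ i : Fin (k - 2), Z i 0 = if i.1 ≤ m then s else -s) ∧
      (∀ (i : Fin (k - 2)) (h : i.1 + 1 < k), Z i 1 = v ⟨i.1 + 1, h⟩) ∧
      (∀ i : Fin (k - 2), Z i 2 = if i.1 < m then -s else s) := by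
    refine ⟨fun i j => if j = 0 then (if i.1 ≤ m then s else -s)
      else if j = 1 then v ⟨i.1 + 1, by have := i.isLt; omega⟩
      else (if i.1 < m then -s else s), fun i => ?_, fun i h => ?_, fun i => ?_⟩ <;>
      simp [show (2 : Fin 3) ≠ 0 by decide, show (2 : Fin 3) ≠ 1 by decide,
        show (1 : Fin 3) ≠ 0 by decide]
  have hspin : ∀ i j, Z i j ∈ ({-1, 1} : Set ℝ) := by
    intro i j
    have hneg : -s = -1 ∨ -s = 1 := by rcases hs with rfl | rfl <;> norm_num
    have hj : j.1 = 0 ∨ j.1 = 1 ∨ j.1 = 2 := by omega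
    rcases hj with hj | hj | hj
    · have : j = 0 := Fin.ext (by simpa using hj)
      subst this
      rw [hZ0 i]
      split_ifs
      · exact hs
      · exact hneg
    · have : j = 1 := Fin.ext (by simpa using hj)
      subst this
      rw [hZ1 i (by have := i.isLt; omega)]
      exact hv _
    · have : j = 2 := Fin.ext (by simpa using hj)
      subst this
      rw [hZ2 i]
      split_ifs
      · exact hneg
      · exact hs
  refine ⟨Z, hspin, ?_, ?_, fun i => hZ1 i _, ?_⟩
  · rw [gadget_ground_iff k hk Z hspin]
    constructor
    · intro i
      have hlt : i.1 + 1 < k := by have := i.isLt; omega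
      rw [hZ0 i, hZ1 i hlt, hZ2 i]
      rcases lt_trichotomy i.1 m with h | h | h
      · rw [if_pos (le_of_lt h), if_pos h]
        rcases hvc ⟨i.1 + 1, hlt⟩ with hb | hb <;> rw [hb] <;>
          rcases hs with rfl | rfl <;> norm_num
      · have hb : v ⟨i.1 + 1, hlt⟩ = -s := by
          have : (⟨i.1 + 1, hlt⟩ : Fin k) = ⟨m + 1, by omega⟩ := Fin.ext (by simp [h])
          rw [this]
          exact hP1 (by have := i.isLt; omega)
        rw [hb, if_pos (le_of_eq h), if_neg (by omega)]
        rcases hs with rfl | rfl <;> norm_num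
      · rw [if_neg (by omega), if_neg (by omega)]
        rcases hvc ⟨i.1 + 1, hlt⟩ with hb | hb <;> rw [hb] <;>
          rcases hs with rfl | rfl <;> norm_num
    · intro i
      rw [hZ2 ⟨i.1, by have := i.isLt; omega⟩, hZ0 ⟨i.1 + 1, by have := i.isLt; omega⟩]
      simp only
      by_cases h : i.1 < m
      · rw [if_pos h, if_pos (by omega)]
        rcases hs with rfl | rfl <;> norm_num
      · rw [if_neg h, if_neg (by omega)]
        rcases hs with rfl | rfl <;> norm_num
  · rw [hZ0 ⟨0, by omega⟩]
    simp only
    rw [if_pos (Nat.zero_le m), hs0]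
  · rw [hZ2 ⟨k - 3, by omega⟩]
    simp only
    rw [hP2]

/-- There is a ground state (energy `-(2k-5)`) of the
`k`-variable NAE clause-gadget whose logical spins
`Z_{1,1}, Z_{1,2}, Z_{2,2}, ..., Z_{k-2,2}, Z_{k-2,3}` take prescribed values
`v_1, ..., v_k ∈ {-1,+1}` iff not all of `v_1, ..., v_k` are equal.-/
theorem clause_gadget_logical_ground_states (k : ℕ) (hk : 3 ≤ k)
    (v : Fin k → ℝ) (hv : ∀ i, v i ∈ ({-1, 1} : Set ℝ)) :
    (∃ Z : Fin (k - 2) → Fin 3 → ℝ,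
      (∀ i j, Z i j ∈ ({-1, 1} : Set ℝ)) ∧
      gadgetH k Z = -(2 * (k : ℝ) - 5) ∧
      Z ⟨0, by omega⟩ 0 = v ⟨0, by omega⟩ ∧
      (∀ i : Fin (k - 2), Z i 1 = v ⟨i.1 + 1, by have := i.isLt; omega⟩) ∧
      Z ⟨k - 3, by omega⟩ 2 = v ⟨k - 1, by omega⟩) ↔
    ¬ ∀ i j, v i = v j := by
  have hvc : ∀ i, v i = -1 ∨ v i = 1 := fun i => hv i
  set s : ℝ := v ⟨0, by omega⟩ with hsdef
  have hs : s = -1 ∨ s = 1 := hvc _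
  constructor
  · rintro ⟨Z, hZ, hE, h00, h1, hlast⟩ hall
    have hvs : ∀ i, v i = s := fun i => hall i ⟨0, by omega⟩
    obtain ⟨htri, hlink⟩ := (gadget_ground_iff k hk Z hZ).1 hE
    have hZs : ∀ i j, Z i j = -1 ∨ Z i j = 1 := fun i j => hZ i j
    -- show by induction that Z ⟨n⟩ 2 = -s for all n < k - 2
    have main : ∀ n (hn : n < k - 2), Z ⟨n, hn⟩ 2 = -s := by
      intro n
      induction n with
      | zero =>
        intro hn
        have ha : Z ⟨0, hn⟩ 0 = s := h00
        have hb : Z ⟨0, hn⟩ 1 = s := by rw [h1 ⟨0, hn⟩]; exact hvs _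
        have := tri_forced (hZs _ 0) (hZs _ 1) (hZs _ 2) (ha.trans hb.symm) (htri ⟨0, hn⟩)
        rw [this, ha]
      | succ n ih =>
        intro hn
        have hn' : n < k - 2 := by omega
        have hl : n < k - 3 := by omega
        have hlinkn := hlink ⟨n, hl⟩
        have h2 : Z ⟨n, hn'⟩ 2 = -s := ih hn'
        have ha : Z ⟨n + 1, hn⟩ 0 = s := by
          have := link_forced (hZs _ 2) (hZs _ 0) hlinkn
          rw [h2] at this
          rw [this, neg_neg]
        have hb : Z ⟨n + 1, hn⟩ 1 = s := by rw [h1 ⟨n + 1, hn⟩]; exact hvs _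
        have := tri_forced (hZs _ 0) (hZs _ 1) (hZs _ 2) (ha.trans hb.symm) (htri ⟨n + 1, hn⟩)
        rw [this, ha]
    have hfin : Z ⟨k - 3, by omega⟩ 2 = -s := main (k - 3) (by omega)
    have : v ⟨k - 1, by omega⟩ = -s := by rw [← hlast]; exact hfin
    rw [hvs _] at this
    rcases hs with h | h <;> rw [h] at this <;> norm_num at this
  · intro hne
    push_neg at hne
    obtain ⟨a, b, hab⟩ := hne
    by_cases hc : v ⟨k - 1, by omega⟩ = s
    · -- endpoint equals v 0; some middle index differs
      have hj : ∃ j, v j ≠ s := by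
        by_cases ha : v a = s
        · exact ⟨b, fun h => hab (by rw [ha, h])⟩
        · exact ⟨a, ha⟩
      obtain ⟨j, hjne⟩ := hj
      have hj0 : j.1 ≠ 0 := by
        intro h
        exact hjne (by rw [show j = ⟨0, by omega⟩ from Fin.ext h])
      have hjk : j.1 ≠ k - 1 := by
        intro h
        apply hjne
        rw [show j = ⟨k - 1, by omega⟩ from Fin.ext h]
        exact hc
      have hjlt : j.1 < k := j.isLt
      refine gadget_constr k hk v hv s hs rfl (j.1 - 1) (by omega) ?_ ?_
      · intro _
        have : (⟨j.1 - 1 + 1, by omega⟩ : Fin k) = j := Fin.ext (by simp; omega)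
        rw [this]
        exact spin_ne (hvc j) hs hjne
      · rw [if_neg (by omega)]
        exact hc
    · refine gadget_constr k hk v hv s hs rfl (k - 2) (by omega) (by omega) ?_
      rw [if_pos (by omega)]
      exact spin_ne (hvc _) hs hc
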